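/- Let A be a commutative monoid (written additively), S ⊆ A a submonoid, and π : A → A/S the projection onto the quotient. Then the kernel π⁻¹(0) of π equals K := {a ∈ A : a + s ∈ S for some s ∈ S}. Moreover K is the smallest kernel containing S: S ⊆ K, and for every monoid homomorphism g : A → C with S ⊆ g⁻¹(0), one has K ⊆ g⁻¹(0). -/

import Mathlib

private def auxCon {A : Type u} [AddCommMonoid A] (S : AddSubmonoid A) : AddCon A where
  r a b := ∃ s ∈ S, ∃ t ∈ S, a + s = b + t
  iseqv := by
    constructor
    · intro a; exact ⟨0, S.zero_mem, 0, S.zero_mem, rfl⟩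
    · rintro a b ⟨s, hs, t, ht, h⟩; exact ⟨t, ht, s, hs, h.symm⟩
    · rintro a b c ⟨s, hs, t, ht, h1⟩ ⟨u, hu, v, hv, h2⟩
      refine ⟨s + u, S.add_mem hs hu, v + t, S.add_mem hv ht, ?_⟩
      calc a + (s + u) = a + s + u := by rw [add_assoc]
        _ = b + t + u := by rw [h1]
        _ = b + u + t := by rw [add_right_comm]
        _ = c + v + t := by rw [h2]
        _ = c + (v + t) := by rw [add_assoc]
  add' := by
    rintro a b a' b' ⟨s, hs, t, ht, h1⟩ ⟨u, hu, v, hv, h2⟩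
    refine ⟨s + u, S.add_mem hs hu, t + v, S.add_mem ht hv, ?_⟩
    calc a + a' + (s + u) = (a + s) + (a' + u) := by abel
      _ = (b + t) + (b' + v) := by rw [h1, h2]
      _ = b + b' + (t + v) := by abel

theorem kernel_of_quotient_projection {A : Type u} [AddCommMonoid A] (S : AddSubmonoid A)
    (K : Set A) (hK : K = {a : A | ∃ s ∈ S, a + s ∈ S}) :
    (∀ a : A, (addConGen (fun x y : A => x ∈ S ∧ y = 0)).mk' a = 0 ↔ a ∈ K) ∧
    (S : Set A) ⊆ K ∧
    (∀ (C : Type u) [AddCommMonoid C] (g : A →+ C),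
      (∀ s ∈ S, g s = 0) → ∀ a ∈ K, g a = 0) := by
  subst hK
  set c := addConGen (fun x y : A => x ∈ S ∧ y = 0) with hc
  have hle : c ≤ auxCon S := by
    refine AddCon.addConGen_le.mpr ?_
    rintro x y ⟨hx, rfl⟩
    exact ⟨0, S.zero_mem, x, hx, by simp⟩
  refine ⟨fun a => ?_, fun a ha => ⟨0, S.zero_mem, by simpa using ha⟩,
    fun C _ g hg a ⟨s, hs, has⟩ => ?_⟩
  · have h0 : (0 : c.Quotient) = c.mk' 0 := (map_zero c.mk').symm
    rw [h0]
    have heq : c.mk' a = c.mk' 0 ↔ c a 0 := c.eq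
    rw [heq]
    constructor
    · intro h
      obtain ⟨s, hs, t, ht, h⟩ := hle h
      exact ⟨s, hs, h ▸ (by simpa using ht)⟩
    · rintro ⟨s, hs, has⟩
      have h1 : c (a + s) 0 := AddConGen.Rel.of _ _ ⟨has, rfl⟩
      have h2 : c s 0 := AddConGen.Rel.of _ _ ⟨hs, rfl⟩
      have h3 : c (a + 0) (a + s) := c.add (c.refl a) (c.symm h2)
      have h4 : c a (a + s) := by simpa using h3
      exact c.trans h4 h1
  · have : g a + g s = g (a + s) := (map_add g a s).symm
    have h1 : g (a + s) = 0 := hg _ has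
    have h2 : g s = 0 := hg _ hs
    calc g a = g a + g s := by rw [h2, add_zero]
      _ = 0 := by rw [this, h1]
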